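/- Let w : ℤ × ℤ → ℂ be nowhere zero and let α, β ∈ ℂ \ {0}. Define A(n,m) := w(n,m)/(α·β·w(n+1,m+1)) and B(n,m) := β·w(n,m+1)/(α·w(n+1,m)). Then the relation A(n,m) = (B(n,m) - 1)/(β² - α²·B(n,m)) holds for all n, m (assuming β² - α²·B(n,m) ≠ 0) if and only if w satisfies the lattice potential modified KdV equation α·(w(n,m)·w(n,m+1) - w(n+1,m)·w(n+1,m+1)) = β·(w(n,m)·w(n+1,m) - w(n,m+1)·w(n+1,m+1)). -/

import Mathlib

/-- with `A = w/(αβ·ŵ̃)` and `B = (β/α)·(ŵ/w̃)`, the Darboux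
factorisation relation `A = (B-1)/(β² - α²·B)` holds for all `n, m` iff `w`
satisfies the lattice potential modified KdV equation. -/
theorem lpmKdV_from_factorisation
    (w : ℤ → ℤ → ℂ) (α β : ℂ)
    (hw : ∀ n m, w n m ≠ 0) (hα : α ≠ 0) (hβ : β ≠ 0)
    (A B : ℤ → ℤ → ℂ)
    (hA : ∀ n m, A n m = w n m / (α * β * w (n + 1) (m + 1)))
    (hB : ∀ n m, B n m = β * w n (m + 1) / (α * w (n + 1) m))
    (hden : ∀ n m, β ^ 2 - α ^ 2 * B n m ≠ 0) :
    (∀ n m, A n m = (B n m - 1) / (β ^ 2 - α ^ 2 * B n m)) ↔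
    (∀ n m, α * (w n m * w n (m + 1) - w (n + 1) m * w (n + 1) (m + 1))
          = β * (w n m * w (n + 1) m - w n (m + 1) * w (n + 1) (m + 1))) := by
  have key : ∀ n m, (A n m = (B n m - 1) / (β ^ 2 - α ^ 2 * B n m)) ↔
      (α * (w n m * w n (m + 1) - w (n + 1) m * w (n + 1) (m + 1))
          = β * (w n m * w (n + 1) m - w n (m + 1) * w (n + 1) (m + 1))) := by
    intro n m
    have hd := hden n m
    have h1 : w (n + 1) m ≠ 0 := hw _ _
    have h2 : w (n + 1) (m + 1) ≠ 0 := hw _ _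
    rw [hB] at hd
    rw [hA, hB]
    rw [div_eq_div_iff (mul_ne_zero (mul_ne_zero hα hβ) h2) hd]
    constructor <;> intro h
    · field_simp [hα, hβ, h1, h2] at h
      have hg : (α*β) * (α * (w n m * w n (m + 1) - w (n + 1) m * w (n + 1) (m + 1)))
          = (α*β) * (β * (w n m * w (n + 1) m - w n (m + 1) * w (n + 1) (m + 1))) := by
        linear_combination (-(α*β)) * h
      exact mul_left_cancel₀ (mul_ne_zero hα hβ) hg
    · field_simp [hα, hβ, h1, h2]
      linear_combination -h
  exact ⟨fun h n m => (key n m).mp (h n m), fun h n m => (key n m).mpr (h n m)⟩
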